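/- Let σ^{(m)} ∈ 𝔖_m be the m-cycle [j] ↦ [j+1] on ℤ/mℤ and τ^{(m)} the transposition of [0] and [1]. Let 𝔖 be the group of bijections of ℤ generated by the shift σ and the transposition τ of 0 and 1. Then the sequence of marked groups {(𝔖_m, σ^{(m)}, τ^{(m)})}_m converges to (𝔖, σ, τ) in the Cayley topology. More precisely, for f ∈ F_2 and every m > 2ℓ(f)+2 (ℓ the word length in F_2), f lies in the kernel of F_2 → 𝔖_m if and only if f lies in the kernel of F_2 → 𝔖. -/

import Mathlib

/-- The space `𝒩(k)` of normal subgroups of the free group `F_k`. -/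
def MarkedNormal (k : ℕ) : Type := {N : Subgroup (FreeGroup (Fin k)) // N.Normal}

open Classical in
/-- The characteristic function `χ_N ∈ {0,1}^{F_k}` of a normal subgroup. -/
noncomputable def chi (k : ℕ) (N : MarkedNormal k) : FreeGroup (Fin k) → Bool :=
  fun g => decide (g ∈ N.1)

/-- The Cayley topology on `𝒩(k)`: the topology of pointwise convergence of
characteristic functions. -/
noncomputable instance cayleyTopology (k : ℕ) : TopologicalSpace (MarkedNormal k) :=
  TopologicalSpace.induced (chi k) inferInstance

/-- The marking `F_2 → 𝔖_m`: `s ↦ σ^{(m)}` (the `m`-cycle `[j] ↦ [j+1]` on `ℤ/mℤ`)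
and `t ↦ τ^{(m)}` (the transposition of `[0]` and `[1]`). -/
noncomputable def symMarking (m : ℕ) : FreeGroup (Fin 2) →* Equiv.Perm (ZMod m) :=
  FreeGroup.lift ![Equiv.addRight (1 : ZMod m), Equiv.swap 0 1]

/-- The marking `F_2 → 𝔖`: `s ↦ σ` (the shift `j ↦ j+1` on `ℤ`) and `t ↦ τ`
(the transposition of `0` and `1`). -/
noncomputable def symMarkingInf : FreeGroup (Fin 2) →* Equiv.Perm ℤ :=
  FreeGroup.lift ![Equiv.addRight (1 : ℤ), Equiv.swap 0 1]


open Equiv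

/-- generators on ℤ -/
noncomputable def gZ (p : Fin 2 × Bool) : Equiv.Perm ℤ :=
  cond p.2 (![Equiv.addRight (1 : ℤ), Equiv.swap 0 1] p.1)
           (![Equiv.addRight (1 : ℤ), Equiv.swap 0 1] p.1)⁻¹

noncomputable def gM (m : ℕ) (p : Fin 2 × Bool) : Equiv.Perm (ZMod m) :=
  cond p.2 (![Equiv.addRight (1 : ZMod m), Equiv.swap 0 1] p.1)
           (![Equiv.addRight (1 : ZMod m), Equiv.swap 0 1] p.1)⁻¹

noncomputable def permZ (w : List (Fin 2 × Bool)) : Equiv.Perm ℤ := (w.map gZ).prod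
noncomputable def permM (m : ℕ) (w : List (Fin 2 × Bool)) : Equiv.Perm (ZMod m) :=
  (w.map (gM m)).prod

def eg (p : Fin 2 × Bool) : ℤ := if p.1 = 0 then (cond p.2 1 (-1)) else 0
def ew (w : List (Fin 2 × Bool)) : ℤ := (w.map eg).sum

lemma gZ_abs (p : Fin 2 × Bool) (x : ℤ) : (gZ p x - x).natAbs ≤ 1 := by
  obtain ⟨i, b⟩ := p
  fin_cases i <;> cases b <;>
    simp [gZ, Equiv.swap_apply_def] <;> split_ifs <;> omega

lemma eg_abs (p : Fin 2 × Bool) : (eg p).natAbs ≤ 1 := by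
  obtain ⟨i, b⟩ := p; fin_cases i <;> cases b <;> simp [eg]

lemma ew_abs (w : List (Fin 2 × Bool)) : (ew w).natAbs ≤ w.length := by
  induction w with
  | nil => simp [ew]
  | cons p w ih =>
    have h1 := eg_abs p
    have h2 : ew (p :: w) = eg p + ew w := by simp [ew]
    have := Int.natAbs_add_le (eg p) (ew w)
    simp only [List.length_cons]
    omega

lemma gZ_far (p : Fin 2 × Bool) (x : ℤ) (h0 : x ≠ 0) (h1 : x ≠ 1) :
    gZ p x = x + eg p := by
  obtain ⟨i, b⟩ := p
  fin_cases i <;> cases b <;>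
    simp [gZ, eg, Equiv.swap_apply_of_ne_of_ne h0 h1] <;> ring

lemma gM_far (m : ℕ) (p : Fin 2 × Bool) (z : ZMod m) (h0 : z ≠ 0) (h1 : z ≠ 1) :
    gM m p z = z + eg p := by
  obtain ⟨i, b⟩ := p
  fin_cases i <;> cases b <;>
    simp [gM, eg, Equiv.swap_apply_of_ne_of_ne h0 h1] <;> ring

lemma gZ_step (m : ℕ) (p : Fin 2 × Bool) (x : ℤ)
    (h0 : (x : ZMod m) = 0 → x = 0) (h1 : (x : ZMod m) = 1 → x = 1) :
    ((gZ p x : ℤ) : ZMod m) = gM m p ((x : ℤ) : ZMod m) := by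
  obtain ⟨i, b⟩ := p
  fin_cases i <;> cases b
  · simp [gZ, gM]
  · simp [gZ, gM]
  · -- swap inverse
    simp only [gZ, gM]
    by_cases hx0 : x = 0
    · subst hx0; simp
    by_cases hx1 : x = 1
    · subst hx1; simp
    have hz0 : (x : ZMod m) ≠ 0 := fun h => hx0 (h0 h)
    have hz1 : (x : ZMod m) ≠ 1 := fun h => hx1 (h1 h)
    simp [Equiv.swap_apply_of_ne_of_ne hx0 hx1,
      Equiv.swap_apply_of_ne_of_ne hz0 hz1]
  · simp only [gZ, gM]
    by_cases hx0 : x = 0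
    · subst hx0; simp
    by_cases hx1 : x = 1
    · subst hx1; simp
    have hz0 : (x : ZMod m) ≠ 0 := fun h => hx0 (h0 h)
    have hz1 : (x : ZMod m) ≠ 1 := fun h => hx1 (h1 h)
    simp [Equiv.swap_apply_of_ne_of_ne hx0 hx1,
      Equiv.swap_apply_of_ne_of_ne hz0 hz1]

lemma intCast_zero_imp (m : ℕ) (y : ℤ) (hy : y.natAbs + 2 ≤ m) :
    ((y : ZMod m) = 0 → y = 0) ∧ ((y : ZMod m) = 1 → y = 1) := by
  constructor
  · intro h
    rw [ZMod.intCast_zmod_eq_zero_iff_dvd] at h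
    by_contra hne
    have := Int.le_of_dvd (abs_pos.mpr hne) ((dvd_abs _ _).mpr h)
    rw [Int.abs_eq_natAbs] at this
    omega
  · intro h
    have h' : ((y - 1 : ℤ) : ZMod m) = 0 := by push_cast [h]; ring
    rw [ZMod.intCast_zmod_eq_zero_iff_dvd] at h'
    by_contra hne
    have hne' : y - 1 ≠ 0 := by omega
    have := Int.le_of_dvd (abs_pos.mpr hne') ((dvd_abs _ _).mpr h')
    rw [Int.abs_eq_natAbs] at this
    omega

lemma mainA (m : ℕ) (w : List (Fin 2 × Bool)) (x : ℤ)
    (h : x.natAbs + w.length + 2 ≤ m) :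
    (permZ w x - x).natAbs ≤ w.length ∧
      ((permZ w x : ℤ) : ZMod m) = permM m w ((x : ℤ) : ZMod m) := by
  induction w with
  | nil => simp [permZ, permM]
  | cons p w ih =>
    have hlen : x.natAbs + w.length + 2 ≤ m := by
      simp only [List.length_cons] at h; omega
    obtain ⟨ih1, ih2⟩ := ih hlen
    set y := permZ w x with hy
    have hstep : permZ (p :: w) x = gZ p y := by
      simp [permZ, Equiv.Perm.mul_apply, hy]
    have hyabs : y.natAbs ≤ x.natAbs + w.length := by omega
    have hcond := intCast_zero_imp m y (by
      simp only [List.length_cons] at h; omega)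
    have hMstep : permM m (p :: w) ((x : ℤ) : ZMod m)
        = gM m p (permM m w ((x : ℤ) : ZMod m)) := by
      simp [permM, Equiv.Perm.mul_apply]
    constructor
    · have := gZ_abs p y
      have h2 : (gZ p y - x).natAbs ≤ (gZ p y - y).natAbs + (y - x).natAbs := by
        have := Int.natAbs_add_le (gZ p y - y) (y - x)
        have e : gZ p y - x = (gZ p y - y) + (y - x) := by ring
        rw [e]; exact Int.natAbs_add_le _ _
      rw [hstep]
      simp only [List.length_cons]
      omega
    · rw [hstep, hMstep, ← ih2]
      exact gZ_step m p y hcond.1 hcond.2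

lemma mainB (m : ℕ) (w : List (Fin 2 × Bool)) (x : ℤ)
    (h : ∀ j : ℤ, j.natAbs ≤ w.length →
      ((x + j : ℤ) : ZMod m) ≠ 0 ∧ ((x + j : ℤ) : ZMod m) ≠ 1) :
    permM m w ((x : ℤ) : ZMod m) = ((x + ew w : ℤ) : ZMod m) := by
  induction w with
  | nil => simp [permM, ew]
  | cons p w ih =>
    have ih' := ih (fun j hj => h j (by simp only [List.length_cons]; omega))
    have hMstep : permM m (p :: w) ((x : ℤ) : ZMod m)
        = gM m p (permM m w ((x : ℤ) : ZMod m)) := by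
      simp [permM, Equiv.Perm.mul_apply]
    rw [hMstep, ih']
    have hbd := ew_abs w
    have hcond := h (ew w) (by simp only [List.length_cons]; omega)
    have hee : ew (p :: w) = eg p + ew w := by simp [ew]
    obtain ⟨i, b⟩ := p
    fin_cases i <;> cases b
    · -- s⁻¹ : i = 0, b = false
      simp only [gM, hee, eg]
      push_cast
      simp only [Matrix.cons_val_zero, cond_false,
        Equiv.coe_addRight, if_true]
      simp
      ring
    · simp only [gM, hee, eg]
      push_cast
      simp
      ring
    · -- t : swap, fixed
      rw [gM_far m _ _ hcond.1 hcond.2]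
      simp only [hee, eg]
      push_cast
      ring
    · rw [gM_far m _ _ hcond.1 hcond.2]
      simp only [hee, eg]
      push_cast
      ring

lemma mainC (w : List (Fin 2 × Bool)) (x : ℤ)
    (h : w.length + 2 ≤ x.natAbs) :
    permZ w x = x + ew w := by
  induction w with
  | nil => simp [permZ, ew]
  | cons p w ih =>
    have ih' := ih (by simp only [List.length_cons] at h; omega)
    have hstep : permZ (p :: w) x = gZ p (permZ w x) := by
      simp [permZ, Equiv.Perm.mul_apply]
    have hbd := ew_abs w
    have h0 : x + ew w ≠ 0 := by simp only [List.length_cons] at h; omega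
    have h1 : x + ew w ≠ 1 := by simp only [List.length_cons] at h; omega
    rw [hstep, ih', gZ_far p _ h0 h1]
    have : ew (p :: w) = eg p + ew w := by simp [ew]
    rw [this]; ring

lemma dvd_small (m : ℕ) (a : ℤ) (hd : (m : ℤ) ∣ a) (h : a.natAbs < m) : a = 0 := by
  by_contra hne
  have := Int.le_of_dvd (abs_pos.mpr hne) ((dvd_abs _ _).mpr hd)
  rw [Int.abs_eq_natAbs] at this; omega

lemma symMarkingInf_eval (f : FreeGroup (Fin 2)) : symMarkingInf f = permZ f.toWord := by
  conv_lhs => rw [← FreeGroup.mk_toWord (x := f)]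
  rw [symMarkingInf, FreeGroup.lift_mk]
  rfl

lemma symMarking_eval (m : ℕ) (f : FreeGroup (Fin 2)) :
    symMarking m f = permM m f.toWord := by
  conv_lhs => rw [← FreeGroup.mk_toWord (x := f)]
  rw [symMarking, FreeGroup.lift_mk]
  rfl

lemma part1 (f : FreeGroup (Fin 2)) (m : ℕ) (hm : 2 * FreeGroup.norm f + 2 < m) :
    f ∈ (symMarking m).ker ↔ f ∈ symMarkingInf.ker := by
  set w := f.toWord with hw
  have hL : FreeGroup.norm f = w.length := rfl
  rw [hL] at hm
  rw [MonoidHom.mem_ker, MonoidHom.mem_ker, symMarking_eval, symMarkingInf_eval,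
    Equiv.ext_iff, Equiv.ext_iff]
  simp only [Equiv.Perm.one_apply, ← hw]
  constructor
  · intro hker
    -- exponent sum is zero
    have hew : ew w = 0 := by
      have hcond : ∀ j : ℤ, j.natAbs ≤ w.length →
          (((w.length : ℤ) + 2 + j : ℤ) : ZMod m) ≠ 0 ∧
          (((w.length : ℤ) + 2 + j : ℤ) : ZMod m) ≠ 1 := by
        intro j hj
        constructor
        · intro h
          rw [ZMod.intCast_zmod_eq_zero_iff_dvd] at h
          have := Int.le_of_dvd (by omega) h
          omega
        · intro h
          have h' : (((w.length : ℤ) + 2 + j - 1 : ℤ) : ZMod m) = 0 := by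
            push_cast at h ⊢; linear_combination h
          rw [ZMod.intCast_zmod_eq_zero_iff_dvd] at h'
          have := Int.le_of_dvd (by omega) h'
          omega
      have hb := mainB m w ((w.length : ℤ) + 2) hcond
      rw [hker] at hb
      have hd : (((w.length : ℤ) + 2 + ew w - ((w.length : ℤ) + 2) : ℤ) : ZMod m) = 0 := by
        push_cast at hb ⊢
        linear_combination -hb
      rw [ZMod.intCast_zmod_eq_zero_iff_dvd] at hd
      have hbd := ew_abs w
      have := dvd_small m _ hd (by simp only [add_sub_cancel_left]; omega)
      simpa using this
    intro x
    by_cases hx : w.length + 2 ≤ x.natAbs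
    · rw [mainC w x hx, hew, add_zero]
    · have hA := mainA m w x (by omega)
      have h2 := hA.2
      rw [hker] at h2
      have hd : ((permZ w x - x : ℤ) : ZMod m) = 0 := by
        push_cast at h2 ⊢; rw [sub_eq_zero]; exact h2
      rw [ZMod.intCast_zmod_eq_zero_iff_dvd] at hd
      have := dvd_small m _ hd (by omega)
      omega
  · intro hker z
    haveI : NeZero m := ⟨by omega⟩
    set x := z.valMinAbs with hx
    have hv : ((x : ℤ) : ZMod m) = z := z.coe_valMinAbs
    have hb : x.natAbs ≤ m / 2 := z.natAbs_valMinAbs_le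
    have hA := mainA m w x (by omega)
    rw [hker x] at hA
    rw [← hv, ← hA.2]

/-- The marked symmetric groups `(𝔖_m, σ^{(m)}, τ^{(m)})` converge to `(𝔖, σ, τ)` in
the Cayley topology; more precisely, for `f ∈ F_2` and every `m > 2ℓ(f)+2`, `f` lies in
the kernel of `F_2 → 𝔖_m` iff it lies in the kernel of `F_2 → 𝔖`. -/
theorem sym_marked_groups_tendsto :
    (∀ f : FreeGroup (Fin 2), ∀ m : ℕ, 2 * FreeGroup.norm f + 2 < m →
      (f ∈ (symMarking m).ker ↔ f ∈ symMarkingInf.ker)) ∧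
    Filter.Tendsto
      (fun m => (⟨(symMarking m).ker, (symMarking m).normal_ker⟩ : MarkedNormal 2))
      Filter.atTop (nhds (X := MarkedNormal 2) ⟨symMarkingInf.ker, symMarkingInf.normal_ker⟩) := by
  refine ⟨fun f m hm => part1 f m hm, ?_⟩
  erw [nhds_induced, Filter.tendsto_comap_iff]
  rw [tendsto_pi_nhds]
  intro g
  apply tendsto_nhds_of_eventually_eq
  filter_upwards [Filter.eventually_gt_atTop (2 * FreeGroup.norm g + 2)] with m hm
  simp only [Function.comp_apply, chi]
  exact decide_eq_decide.mpr (part1 g m hm)
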